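/- There exists an absolute constant C > 0 with the following property. Let n ≥ 1 and let S ⊂ [0,1) be finite with |S| ≥ 2 and |τ − τ'|_T ≥ C(1 + log|S|)/n for all distinct τ, τ' ∈ S. Set κ = 2π·√(n(n+1)/3) (so κ² = |D_N''(0)|), and define the S×S matrices (D₀)_{τ,τ'} = D_N(τ − τ'), (D₁)_{τ,τ'} = D_N'(τ − τ'), (D₂)_{τ,τ'} = D_N''(τ − τ'). Then the 2|S| × 2|S| block matrix [[D₀, κ⁻¹D₁], [−κ⁻¹D₁, −κ⁻²D₂]] is invertible. -/

import Mathlib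

/-- The normalized Dirichlet kernel `D_N(θ) = (1/(2n+1)) ∑_{k=-n}^{n} e^{2πikθ}`. -/
noncomputable def DN (n : ℕ) (θ : ℝ) : ℝ :=
  (1 / (2 * (n : ℝ) + 1)) *
    (∑ k ∈ Finset.Icc (-(n : ℤ)) (n : ℤ),
      Complex.exp (2 * (Real.pi : ℂ) * Complex.I * (k : ℂ) * (θ : ℂ))).re

/-- The wrap-around (modulo 1) distance `|x|_T = min_{m ∈ ℤ} |x − m|`. -/
noncomputable def torusDist (x : ℝ) : ℝ :=
  sInf (Set.range fun m : ℤ => |x - (m : ℝ)|)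

noncomputable def cE (k : ℤ) (θ : ℝ) : ℂ := Complex.exp (2 * (Real.pi : ℂ) * Complex.I * (k : ℂ) * (θ : ℂ))

lemma hasDerivAt_cE (k : ℤ) (θ : ℝ) :
    HasDerivAt (fun t : ℝ => cE k t) (cE k θ * (2 * (Real.pi : ℂ) * Complex.I * k)) θ := by
  have h1 : HasDerivAt (fun t : ℝ => 2 * (Real.pi : ℂ) * Complex.I * (k : ℂ) * (t : ℂ))
      (2 * (Real.pi : ℂ) * Complex.I * k) θ := by
    simpa only [mul_one, id_eq] using
      ((hasDerivAt_id (θ : ℂ)).const_mul (2 * (Real.pi : ℂ) * Complex.I * (k : ℂ))).comp_ofReal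
  exact h1.cexp

lemma hasDerivAt_DNsum (n : ℕ) (j : ℕ) (θ : ℝ) :
    HasDerivAt (fun t : ℝ => (1 / (2 * (n : ℝ) + 1)) *
        (∑ k ∈ Finset.Icc (-(n : ℤ)) (n : ℤ),
          (2 * (Real.pi : ℂ) * Complex.I * k) ^ j * cE k t).re)
      ((1 / (2 * (n : ℝ) + 1)) *
        (∑ k ∈ Finset.Icc (-(n : ℤ)) (n : ℤ),
          (2 * (Real.pi : ℂ) * Complex.I * k) ^ (j + 1) * cE k θ).re) θ := by
  have hsum : HasDerivAt (fun t : ℝ => ∑ k ∈ Finset.Icc (-(n : ℤ)) (n : ℤ),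
        (2 * (Real.pi : ℂ) * Complex.I * k) ^ j * cE k t)
      (∑ k ∈ Finset.Icc (-(n : ℤ)) (n : ℤ),
        (2 * (Real.pi : ℂ) * Complex.I * k) ^ (j + 1) * cE k θ) θ := by
    apply HasDerivAt.fun_sum
    intro k _
    have h := (hasDerivAt_cE k θ).const_mul ((2 * (Real.pi : ℂ) * Complex.I * k) ^ j)
    convert h using 1
    · rfl
    ring
  exact (Complex.reCLM.hasFDerivAt.comp_hasDerivAt θ hsum).const_mul _

lemma DN_eq (n : ℕ) : DN n = fun θ => (1 / (2 * (n : ℝ) + 1)) *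
    (∑ k ∈ Finset.Icc (-(n : ℤ)) (n : ℤ),
      (2 * (Real.pi : ℂ) * Complex.I * k) ^ 0 * cE k θ).re := by
  funext θ; simp [DN, cE]

lemma deriv_DN (n : ℕ) : deriv (DN n) = fun θ => (1 / (2 * (n : ℝ) + 1)) *
    (∑ k ∈ Finset.Icc (-(n : ℤ)) (n : ℤ),
      (2 * (Real.pi : ℂ) * Complex.I * k) ^ 1 * cE k θ).re := by
  funext θ; rw [DN_eq]; exact (hasDerivAt_DNsum n 0 θ).deriv

lemma deriv2_DN (n : ℕ) : deriv (deriv (DN n)) = fun θ => (1 / (2 * (n : ℝ) + 1)) *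
    (∑ k ∈ Finset.Icc (-(n : ℤ)) (n : ℤ),
      (2 * (Real.pi : ℂ) * Complex.I * k) ^ 2 * cE k θ).re := by
  funext θ; rw [deriv_DN]; exact (hasDerivAt_DNsum n 1 θ).deriv

lemma conj_cE (k : ℤ) (θ : ℝ) : (starRingEnd ℂ) (cE k θ) = cE (-k) θ := by
  rw [cE, cE, ← Complex.exp_conj]
  congr 1
  simp only [map_mul, Complex.conj_I, Complex.conj_ofReal, map_intCast, map_ofNat]
  push_cast
  ring

lemma cE_mul_conj (k : ℤ) (τ τ' : ℝ) : cE k τ * (starRingEnd ℂ) (cE k τ') = cE k (τ - τ') := by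
  rw [conj_cE, cE, cE, cE, ← Complex.exp_add]
  congr 1
  push_cast
  ring

lemma cE_eq_zpow (k : ℤ) (θ : ℝ) : cE k θ = (cE 1 θ) ^ k := by
  rw [cE, cE, ← Complex.exp_int_mul]
  congr 1
  push_cast
  ring

lemma sum_cE_real (n : ℕ) (j : ℕ) (r : ℝ) :
    ((((∑ k ∈ Finset.Icc (-(n : ℤ)) (n : ℤ),
        (2 * (Real.pi : ℂ) * Complex.I * k) ^ j * cE k r).re : ℝ)) : ℂ)
      = ∑ k ∈ Finset.Icc (-(n : ℤ)) (n : ℤ),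
          (2 * (Real.pi : ℂ) * Complex.I * k) ^ j * cE k r := by
  rw [Complex.conj_eq_iff_re.mp ?_]
  rw [map_sum]
  refine Finset.sum_nbij' (fun k => -k) (fun k => -k)
    (fun k hk => by simp only [Finset.mem_Icc] at *; omega)
    (fun k hk => by simp only [Finset.mem_Icc] at *; omega)
    (by simp) (by simp) ?_
  intro k hk
  rw [map_mul, map_pow, conj_cE]
  congr 2
  simp only [map_mul, Complex.conj_I, Complex.conj_ofReal, map_intCast, map_ofNat]
  push_cast
  ring

lemma quad {ι : Type*} [Fintype ι] (K : Finset ℤ) (c : ℂ) (u : ι → ℤ → ℂ) (v : ι → ℂ) :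
    ∑ a, (starRingEnd ℂ) (v a) * (∑ b, (c * ∑ k ∈ K, u a k * (starRingEnd ℂ) (u b k)) * v b)
      = c * ∑ k ∈ K, (starRingEnd ℂ) (∑ b, v b * (starRingEnd ℂ) (u b k))
          * (∑ b, v b * (starRingEnd ℂ) (u b k)) := by
  have L : ∑ a, (starRingEnd ℂ) (v a)
        * (∑ b, (c * ∑ k ∈ K, u a k * (starRingEnd ℂ) (u b k)) * v b)
      = ∑ a, ∑ b, ∑ k ∈ K,
          c * (((starRingEnd ℂ) (v a) * u a k) * ((starRingEnd ℂ) (u b k) * v b)) := by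
    refine Finset.sum_congr rfl fun a _ => ?_
    rw [Finset.mul_sum]
    refine Finset.sum_congr rfl fun b _ => ?_
    simp only [Finset.mul_sum, Finset.sum_mul]
    exact Finset.sum_congr rfl fun k _ => by ring
  have R : c * ∑ k ∈ K, (starRingEnd ℂ) (∑ b, v b * (starRingEnd ℂ) (u b k))
          * (∑ b, v b * (starRingEnd ℂ) (u b k))
      = ∑ k ∈ K, ∑ a, ∑ b,
          c * (((starRingEnd ℂ) (v a) * u a k) * ((starRingEnd ℂ) (u b k) * v b)) := by
    rw [Finset.mul_sum]
    refine Finset.sum_congr rfl fun k _ => ?_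
    simp only [map_sum, map_mul, Complex.conj_conj]
    rw [Finset.sum_mul_sum]
    simp only [Finset.mul_sum]
    refine Finset.sum_congr rfl fun a _ => ?_
    refine Finset.sum_congr rfl fun b _ => ?_
    ring
  rw [L, R]
  rw [Finset.sum_congr rfl fun (a : ι) (_ : a ∈ Finset.univ) =>
    Finset.sum_comm (s := Finset.univ) (t := K)
      (f := fun b k => c * (((starRingEnd ℂ) (v a) * u a k) * ((starRingEnd ℂ) (u b k) * v b)))]
  exact Finset.sum_comm

lemma cE_mul_neg (k : ℤ) (τ τ' : ℝ) : cE k τ * cE (-k) τ' = cE k (τ - τ') := by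
  rw [cE, cE, cE, ← Complex.exp_add]
  congr 1
  push_cast
  ring


open Polynomial Finset

lemma range_map_eq (n : ℕ) : Finset.Icc (-(n : ℤ)) (n : ℤ) = Finset.map
    ⟨fun m : ℕ => (m : ℤ) - n, @id (Function.Injective fun m : ℕ => (m : ℤ) - n) (by
      intro x y h
      simp only at h
      omega)⟩ (Finset.range (2 * n + 1)) := by
  ext k
  simp only [Finset.mem_Icc, Finset.mem_map, Finset.mem_range, Function.Embedding.coeFn_mk]
  constructor
  · intro h; exact ⟨(k + n).toNat, by omega, by omega⟩
  · rintro ⟨m, hm, rfl⟩; omega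

-- ∑_{m ∈ range (M+1)} m * c_m * w^m = w * P'(w)
lemma sum_mul_coeff_eq (M : ℕ) (P : ℂ[X]) (hdeg : P.natDegree < M + 1) (w : ℂ) :
    ∑ m ∈ Finset.range (M + 1), (m : ℂ) * P.coeff m * w ^ m
      = w * (Polynomial.derivative P).eval w := by
  have hd : (Polynomial.derivative P).natDegree < M + 1 :=
    lt_of_le_of_lt (Polynomial.natDegree_derivative_le P) (by omega)
  rw [Polynomial.eval_eq_sum_range' hd w, Finset.mul_sum]
  rw [Finset.sum_range_succ' (fun m => (m : ℂ) * P.coeff m * w ^ m) M]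
  rw [Finset.sum_range_succ (fun i => w * ((Polynomial.derivative P).coeff i * w ^ i)) M]
  have hcoef : P.coeff (M + 1) = 0 :=
    Polynomial.coeff_eq_zero_of_natDegree_lt (by omega)
  rw [Polynomial.coeff_derivative, hcoef]
  simp only [Nat.cast_zero, zero_mul, add_zero, pow_zero, mul_one, zero_mul, mul_zero]
  refine Finset.sum_congr rfl fun i _ => ?_
  rw [Polynomial.coeff_derivative]
  push_cast
  ring

lemma sum_coeff_zpow (n : ℕ) (P : ℂ[X]) (hdeg : P.natDegree < 2 * n + 1) (w : ℂ) (hw : w ≠ 0) :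
    ∑ k ∈ Finset.Icc (-(n : ℤ)) (n : ℤ), P.coeff (k + n).toNat * w ^ k
      = w ^ (-(n : ℤ)) * P.eval w := by
  rw [range_map_eq n, Finset.sum_map, Polynomial.eval_eq_sum_range' hdeg w, Finset.mul_sum]
  refine Finset.sum_congr rfl fun m hm => ?_
  simp only [Function.Embedding.coeFn_mk]
  rw [show ((m : ℤ) - n + n).toNat = m by omega]
  simp only [zpow_sub₀ hw, zpow_natCast, zpow_neg]
  field_simp

lemma sum_coeff_zpow' (n : ℕ) (P : ℂ[X]) (hdeg : P.natDegree < 2 * n + 1) (w : ℂ) (hw : w ≠ 0) :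
    ∑ k ∈ Finset.Icc (-(n : ℤ)) (n : ℤ), P.coeff (k + n).toNat * k * w ^ k
      = w ^ (-(n : ℤ)) * (w * (Polynomial.derivative P).eval w - n * P.eval w) := by
  rw [range_map_eq n, Finset.sum_map]
  simp only [Function.Embedding.coeFn_mk]
  have step : ∀ m ∈ Finset.range (2 * n + 1),
      P.coeff (((m : ℤ) - n) + n).toNat * (((m : ℤ) - n : ℤ) : ℂ) * w ^ ((m : ℤ) - n)
        = w ^ (-(n : ℤ)) * ((m : ℂ) * P.coeff m * w ^ m)
          - w ^ (-(n : ℤ)) * ((n : ℂ) * (P.coeff m * w ^ m)) := by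
    intro m hm
    rw [show ((m : ℤ) - n + n).toNat = m by omega]
    simp only [zpow_sub₀ hw, zpow_natCast, zpow_neg]
    push_cast
    field_simp
  rw [Finset.sum_congr rfl step, Finset.sum_sub_distrib, ← Finset.mul_sum, ← Finset.mul_sum,
    ← Finset.mul_sum, sum_mul_coeff_eq (2 * n) P hdeg w,
    ← Polynomial.eval_eq_sum_range' hdeg w]
  ring

section indep
variable {ι : Type*} [Fintype ι] [DecidableEq ι]

/-- key evaluation identity -/
lemma key_eval (n : ℕ) (z : ι → ℂ) (hz0 : ∀ i, z i ≠ 0) (a b : ι → ℂ) (i₀ : ι)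
    (H : ∀ k : ℤ, k ∈ Finset.Icc (-(n : ℤ)) (n : ℤ) →
      ∑ i, (a i + b i * (k : ℂ)) * z i ^ k = 0)
    (P : ℂ[X]) (hdeg : P.natDegree < 2 * n + 1)
    (hP : ∀ i, i ≠ i₀ → P.eval (z i) = 0 ∧ (Polynomial.derivative P).eval (z i) = 0) :
    a i₀ * ((z i₀) ^ (-(n : ℤ)) * P.eval (z i₀))
      + b i₀ * ((z i₀) ^ (-(n : ℤ)) *
          ((z i₀) * (Polynomial.derivative P).eval (z i₀) - n * P.eval (z i₀))) = 0 := by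
  have main : ∑ i, (a i * ((z i) ^ (-(n : ℤ)) * P.eval (z i))
      + b i * ((z i) ^ (-(n : ℤ)) *
          ((z i) * (Polynomial.derivative P).eval (z i) - n * P.eval (z i)))) = 0 := by
    have expand : ∀ i : ι, a i * ((z i) ^ (-(n : ℤ)) * P.eval (z i))
        + b i * ((z i) ^ (-(n : ℤ)) *
            ((z i) * (Polynomial.derivative P).eval (z i) - n * P.eval (z i)))
        = ∑ k ∈ Finset.Icc (-(n : ℤ)) (n : ℤ),
            P.coeff (k + n).toNat * ((a i + b i * (k : ℂ)) * z i ^ k) := by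
      intro i
      have e1 := sum_coeff_zpow n P hdeg (z i) (hz0 i)
      have e2 := sum_coeff_zpow' n P hdeg (z i) (hz0 i)
      rw [← e1, ← e2, Finset.mul_sum, Finset.mul_sum, ← Finset.sum_add_distrib]
      refine Finset.sum_congr rfl fun k _ => ?_
      ring
    rw [Finset.sum_congr rfl fun i _ => expand i, Finset.sum_comm]
    refine Finset.sum_eq_zero fun k hk => ?_
    rw [← Finset.mul_sum, H k hk, mul_zero]
  rw [← main]
  symm
  refine Finset.sum_eq_single i₀ (fun i _ hi => ?_) (fun h => absurd (Finset.mem_univ i₀) h)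
  rw [(hP i hi).1, (hP i hi).2]
  ring

lemma indep_coeffs (n : ℕ) (z : ι → ℂ) (hz : Function.Injective z) (hz0 : ∀ i, z i ≠ 0)
    (hcard : Fintype.card ι ≤ n) (hpos : Nonempty ι) (a b : ι → ℂ)
    (H : ∀ k : ℤ, k ∈ Finset.Icc (-(n : ℤ)) (n : ℤ) →
      ∑ i, (a i + b i * (k : ℂ)) * z i ^ k = 0) :
    ∀ i, a i = 0 ∧ b i = 0 := by
  intro i₀
  set z₀ := z i₀ with hz₀
  set V : ℂ[X] := ∏ i ∈ Finset.univ.erase i₀, (X - C (z i)) with hV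
  have hVdeg : V.natDegree ≤ Fintype.card ι - 1 := by
    refine le_trans (Polynomial.natDegree_prod_le _ _) ?_
    have h2 : ∑ i ∈ Finset.univ.erase i₀, (X - C (z i)).natDegree
        = (Finset.univ.erase i₀).card := by
      rw [Finset.sum_congr rfl fun i _ => Polynomial.natDegree_X_sub_C (z i)]
      simp
    rw [h2, Finset.card_erase_of_mem (Finset.mem_univ _), Finset.card_univ]
  have hcard1 : 1 ≤ Fintype.card ι := Fintype.card_pos_iff.mpr hpos
  have hV₀ : V.eval z₀ ≠ 0 := by
    rw [hV, Polynomial.eval_prod]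
    refine Finset.prod_ne_zero_iff.mpr fun i hi => ?_
    simp only [Polynomial.eval_sub, Polynomial.eval_X, Polynomial.eval_C]
    exact sub_ne_zero_of_ne fun hc => (Finset.ne_of_mem_erase hi) (hz hc.symm)
  have hVz : ∀ i, i ≠ i₀ → V.eval (z i) = 0 := by
    intro i hi
    rw [hV, Polynomial.eval_prod]
    exact Finset.prod_eq_zero (Finset.mem_erase.mpr ⟨hi, Finset.mem_univ _⟩) (by simp)
  have hz₀0 : z₀ ≠ 0 := hz0 i₀
  have hVV : ∀ L : ℂ[X], (Polynomial.derivative (V ^ 2 * L)).eval z₀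
      = 2 * V.eval z₀ * (Polynomial.derivative V).eval z₀ * L.eval z₀
        + (V.eval z₀) ^ 2 * (Polynomial.derivative L).eval z₀ := by
    intro L
    rw [Polynomial.derivative_mul, Polynomial.derivative_pow]
    simp only [Polynomial.eval_add, Polynomial.eval_mul, Polynomial.eval_pow,
      Polynomial.eval_C, Nat.cast_ofNat, pow_one]
    ring
  -- evaluation of P := V^2 * L at the other nodes kills everything
  have hPzero : ∀ L : ℂ[X], ∀ i, i ≠ i₀ → (V ^ 2 * L).eval (z i) = 0 ∧
      (Polynomial.derivative (V ^ 2 * L)).eval (z i) = 0 := by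
    intro L i hi
    constructor
    · simp [Polynomial.eval_mul, Polynomial.eval_pow, hVz i hi]
    · rw [Polynomial.derivative_mul, Polynomial.derivative_pow]
      simp [Polynomial.eval_mul, Polynomial.eval_pow, Polynomial.eval_add, hVz i hi]
  have hdegL : ∀ L : ℂ[X], L.natDegree ≤ 1 → (V ^ 2 * L).natDegree < 2 * n + 1 := by
    intro L hL
    refine lt_of_le_of_lt (Polynomial.natDegree_mul_le) ?_
    have : (V ^ 2).natDegree ≤ 2 * (Fintype.card ι - 1) := by
      rw [Polynomial.natDegree_pow]; omega
    omega
  constructor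
  · -- kill a i₀
    set α : ℂ := (V.eval z₀ ^ 2)⁻¹ with hα
    set β : ℂ := ((n : ℂ) / z₀ - 2 * V.eval z₀ * (Polynomial.derivative V).eval z₀ * α)
        / V.eval z₀ ^ 2 with hβ
    set L : ℂ[X] := C α + C β * (X - C z₀) with hL
    have hLdeg : L.natDegree ≤ 1 :=
      le_trans (Polynomial.natDegree_add_le _ _) (max_le (by simp)
        (le_trans Polynomial.natDegree_mul_le (by simp [Polynomial.natDegree_X_sub_C])))
    have hkey := key_eval n z hz0 a b i₀ H (V ^ 2 * L) (hdegL L hLdeg) (hPzero L)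
    have hevalL : L.eval z₀ = α := by
      simp [hL]
    have hdL : Polynomial.derivative L = C β := by
      rw [hL]; simp
    have hevalP : (V ^ 2 * L).eval z₀ = 1 := by
      rw [Polynomial.eval_mul, Polynomial.eval_pow, hevalL, hα]
      field_simp
    have hevalP' : (Polynomial.derivative (V ^ 2 * L)).eval z₀ = (n : ℂ) / z₀ := by
      rw [hVV L, hevalL, hdL, Polynomial.eval_C, hβ, mul_div_assoc',
        mul_div_cancel_left₀ _ (pow_ne_zero 2 hV₀)]
      ring
    rw [hevalP, hevalP'] at hkey
    have hz' : z₀ * ((n : ℂ) / z₀) - n * 1 = 0 := by field_simp; ring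
    rw [hz', mul_zero, mul_zero, add_zero, mul_one] at hkey
    exact (mul_eq_zero.mp hkey).resolve_right (zpow_ne_zero _ hz₀0)
  · -- kill b i₀
    set γ : ℂ := (z₀ * V.eval z₀ ^ 2)⁻¹ with hγ
    set L : ℂ[X] := C γ * (X - C z₀) with hL
    have hLdeg : L.natDegree ≤ 1 :=
      le_trans Polynomial.natDegree_mul_le (by simp [Polynomial.natDegree_X_sub_C])
    have hkey := key_eval n z hz0 a b i₀ H (V ^ 2 * L) (hdegL L hLdeg) (hPzero L)
    have hevalL : L.eval z₀ = 0 := by simp [hL]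
    have hdL : Polynomial.derivative L = C γ := by rw [hL]; simp
    have hevalP : (V ^ 2 * L).eval z₀ = 0 := by
      rw [Polynomial.eval_mul, hevalL, mul_zero]
    have hevalP' : (Polynomial.derivative (V ^ 2 * L)).eval z₀ = 1 / z₀ := by
      rw [hVV L, hevalL, hdL, Polynomial.eval_C, hγ, mul_zero, zero_add]
      field_simp
    rw [hevalP, hevalP'] at hkey
    have h1 : z₀ * (1 / z₀) - (n : ℂ) * 0 = 1 := by field_simp; ring
    rw [h1, mul_zero, mul_zero, zero_add, mul_one] at hkey
    exact (mul_eq_zero.mp hkey).resolve_right (zpow_ne_zero _ hz₀0)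

end indep

lemma torusDist_le_abs (x : ℝ) : torusDist x ≤ |x| := by
  have h : torusDist x ≤ |x - ((0 : ℤ) : ℝ)| := by
    apply csInf_le
    · refine ⟨0, ?_⟩
      rintro y ⟨m, rfl⟩
      exact abs_nonneg _
    · exact ⟨0, rfl⟩
  simpa using h

lemma card_le_n (n : ℕ) (hn : 1 ≤ n) (S : Finset ℝ) (hsub : ↑S ⊆ Set.Ico (0 : ℝ) 1)
    (hcard2 : 2 ≤ S.card)
    (hsep : ∀ τ ∈ S, ∀ τ' ∈ S, τ ≠ τ' →
      1 * (1 + Real.log S.card) / n ≤ torusDist (τ - τ')) :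
    S.card ≤ n := by
  have hn0 : (0 : ℝ) < n := by exact_mod_cast hn
  have hlog : (0 : ℝ) ≤ Real.log S.card :=
    Real.log_nonneg (by exact_mod_cast le_trans (by norm_num) hcard2)
  have key : ∀ τ ∈ S, ∀ τ' ∈ S, τ ≠ τ' → (1 : ℝ) / n ≤ |τ - τ'| := by
    intro τ hτ τ' hτ' hne
    have h1 := hsep τ hτ τ' hτ' hne
    have h2 := torusDist_le_abs (τ - τ')
    have h3 : (1 : ℝ) / n ≤ 1 * (1 + Real.log S.card) / n := by
      gcongr
      linarith
    linarith
  have : S.card ≤ (Finset.range n).card := by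
    refine Finset.card_le_card_of_injOn (fun τ : ℝ => ⌊τ * (n : ℝ)⌋₊) ?_ ?_
    · intro τ hτ
      obtain ⟨h0, h1⟩ := hsub hτ
      simp only [Finset.mem_coe, Finset.mem_range]
      have : τ * n < n := by nlinarith
      exact Nat.floor_lt (by positivity) |>.mpr this
    · intro τ hτ τ' hτ' heq
      by_contra hne
      have h1 := key τ hτ τ' hτ' hne
      have l1 : ⌊τ * n⌋₊ ≤ τ * n := Nat.floor_le (by
        obtain ⟨h0, _⟩ := hsub hτ; positivity)
      have l2 : ⌊τ' * n⌋₊ ≤ τ' * n := Nat.floor_le (by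
        obtain ⟨h0, _⟩ := hsub hτ'; positivity)
      have l3 : τ * n < ⌊τ * n⌋₊ + 1 := Nat.lt_floor_add_one _
      have l4 : τ' * n < ⌊τ' * n⌋₊ + 1 := Nat.lt_floor_add_one _
      simp only at heq
      rw [heq] at l1 l3
      have d1 : τ - τ' < 1 / n := by
        rw [lt_div_iff₀ hn0]
        nlinarith
      have d2 : τ' - τ < 1 / n := by
        rw [lt_div_iff₀ hn0]
        nlinarith
      have habs : |τ - τ'| < 1 / n := abs_sub_lt_iff.mpr ⟨d1, d2⟩
      linarith
  simpa using this

lemma cE_one_inj {τ τ' : ℝ} (h0 : 0 ≤ τ) (h1 : τ < 1) (h0' : 0 ≤ τ') (h1' : τ' < 1)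
    (he : cE 1 τ = cE 1 τ') : τ = τ' := by
  rw [cE, cE, Complex.exp_eq_exp_iff_exists_int] at he
  obtain ⟨m, hm⟩ := he
  have hπ : (Real.pi : ℂ) ≠ 0 := Complex.ofReal_ne_zero.mpr Real.pi_ne_zero
  have h2 : 2 * (Real.pi : ℂ) * Complex.I * ((τ : ℂ) - τ' - m) = 0 := by
    push_cast at hm ⊢
    linear_combination hm
  have h3 : ((τ : ℂ) - τ' - m) = 0 := by
    rcases mul_eq_zero.mp h2 with h | h
    · exact absurd h (mul_ne_zero (mul_ne_zero two_ne_zero hπ) Complex.I_ne_zero)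
    · exact h
  have hr : τ - τ' - m = 0 := by exact_mod_cast h3
  have hm1 : |(m : ℝ)| < 1 := by
    rw [abs_lt]; constructor <;> nlinarith
  have hm0 : m = 0 := by
    have hlt := abs_lt.mp hm1
    have h5 : (-1 : ℝ) < (m : ℝ) ∧ ((m : ℝ) : ℝ) < 1 := ⟨hlt.1, hlt.2⟩
    have h6 : -1 < m ∧ m < 1 := by exact_mod_cast h5
    omega
  rw [hm0] at hr
  push_cast at hr
  linarith

/-- There is an absolute constant `C > 0` such that, whenever `n ≥ 1` and `S ⊂ [0,1)` has
at least two points, all at wrap-around distance at least `C(1+log|S|)/n` from one another,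
the block matrix `[[D₀, κ⁻¹D₁], [−κ⁻¹D₁, −κ⁻²D₂]]` is invertible, where
`κ = 2π√(n(n+1)/3)` and `(D_j)_{τ,τ'}` is the `j`-th derivative of `D_N` at `τ − τ'`. -/
theorem interpolation_system_invertible :
    ∃ C : ℝ, 0 < C ∧
      ∀ n : ℕ, 1 ≤ n → ∀ S : Finset ℝ, ↑S ⊆ Set.Ico (0 : ℝ) 1 → 2 ≤ S.card →
        (∀ τ ∈ S, ∀ τ' ∈ S, τ ≠ τ' →
          C * (1 + Real.log S.card) / n ≤ torusDist (τ - τ')) →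
        IsUnit
          (Matrix.fromBlocks
            (Matrix.of fun τ τ' : {x // x ∈ S} => DN n ((τ : ℝ) - (τ' : ℝ)))
            ((2 * Real.pi * Real.sqrt ((n : ℝ) * ((n : ℝ) + 1) / 3))⁻¹ •
              Matrix.of fun τ τ' : {x // x ∈ S} => deriv (DN n) ((τ : ℝ) - (τ' : ℝ)))
            (-((2 * Real.pi * Real.sqrt ((n : ℝ) * ((n : ℝ) + 1) / 3))⁻¹ •
              Matrix.of fun τ τ' : {x // x ∈ S} => deriv (DN n) ((τ : ℝ) - (τ' : ℝ))))
            (-(((2 * Real.pi * Real.sqrt ((n : ℝ) * ((n : ℝ) + 1) / 3)) ^ 2)⁻¹ •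
              Matrix.of fun τ τ' : {x // x ∈ S} =>
                deriv (deriv (DN n)) ((τ : ℝ) - (τ' : ℝ))))) := by
  classical
  refine ⟨1, one_pos, ?_⟩
  intro n hn S hsub hcard hsep
  have hmn : S.card ≤ n := card_le_n n hn S hsub hcard hsep
  set κ : ℝ := 2 * Real.pi * Real.sqrt ((n : ℝ) * ((n : ℝ) + 1) / 3) with hκdef
  have hn0 : (0 : ℝ) < n := by exact_mod_cast hn
  have hκpos : 0 < κ := by
    rw [hκdef]
    have hs : 0 < Real.sqrt ((n : ℝ) * ((n : ℝ) + 1) / 3) :=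
      Real.sqrt_pos.mpr (by positivity)
    positivity
  have hκ : κ ≠ 0 := ne_of_gt hκpos
  set ι := {x // x ∈ S} with hι
  set M : Matrix (ι ⊕ ι) (ι ⊕ ι) ℝ := Matrix.fromBlocks
            (Matrix.of fun τ τ' : ι => DN n ((τ : ℝ) - (τ' : ℝ)))
            (κ⁻¹ • Matrix.of fun τ τ' : ι => deriv (DN n) ((τ : ℝ) - (τ' : ℝ)))
            (-(κ⁻¹ • Matrix.of fun τ τ' : ι => deriv (DN n) ((τ : ℝ) - (τ' : ℝ))))
            (-((κ ^ 2)⁻¹ • Matrix.of fun τ τ' : ι =>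
                deriv (deriv (DN n)) ((τ : ℝ) - (τ' : ℝ)))) with hM
  show IsUnit M
  set K : Finset ℤ := Finset.Icc (-(n : ℤ)) (n : ℤ) with hK
  set cN : ℂ := (((2 * (n : ℝ) + 1 : ℝ)) : ℂ)⁻¹ with hcN
  set u : ι ⊕ ι → ℤ → ℂ := fun a k => Sum.elim
      (fun τ : ι => cE k (τ : ℝ))
      (fun τ : ι => -((κ : ℂ))⁻¹ * (2 * (Real.pi : ℂ) * Complex.I * k) * cE k (τ : ℝ)) a
    with hu
  -- auxiliary coercion facts
  have hNne : ((2 * (n : ℝ) + 1 : ℝ)) ≠ 0 := by positivity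
  have e0 : ∀ r : ℝ, ((DN n r : ℝ) : ℂ)
      = cN * ∑ k ∈ K, (2 * (Real.pi : ℂ) * Complex.I * k) ^ 0 * cE k r := by
    intro r
    rw [DN_eq n]
    simp only [one_div]
    rw [Complex.ofReal_mul, sum_cE_real n 0 r, hcN, Complex.ofReal_inv]
  have e1 : ∀ r : ℝ, ((deriv (DN n) r : ℝ) : ℂ)
      = cN * ∑ k ∈ K, (2 * (Real.pi : ℂ) * Complex.I * k) ^ 1 * cE k r := by
    intro r
    rw [deriv_DN n]
    simp only [one_div]
    rw [Complex.ofReal_mul, sum_cE_real n 1 r, hcN, Complex.ofReal_inv]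
  have e2 : ∀ r : ℝ, ((deriv (deriv (DN n)) r : ℝ) : ℂ)
      = cN * ∑ k ∈ K, (2 * (Real.pi : ℂ) * Complex.I * k) ^ 2 * cE k r := by
    intro r
    rw [deriv2_DN n]
    simp only [one_div]
    rw [Complex.ofReal_mul, sum_cE_real n 2 r, hcN, Complex.ofReal_inv]
  have hmap : M.map (Complex.ofRealHom : ℝ →+* ℂ)
      = Matrix.of (fun a b : ι ⊕ ι => cN * ∑ k ∈ K, u a k * (starRingEnd ℂ) (u b k)) := by
    ext a b
    cases a with
    | inl τ =>
      cases b with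
      | inl τ' =>
        simp only [Matrix.map_apply, hM, Matrix.fromBlocks_apply₁₁, Matrix.of_apply,
          Complex.ofRealHom_eq_coe, hu, Sum.elim_inl]
        rw [e0 ((τ : ℝ) - (τ' : ℝ))]
        congr 1
        refine Finset.sum_congr rfl fun k _ => ?_
        rw [conj_cE, ← cE_mul_neg k (τ : ℝ) (τ' : ℝ)]
        ring
      | inr τ' =>
        simp only [Matrix.map_apply, hM, Matrix.fromBlocks_apply₁₂, Matrix.of_apply,
          Matrix.smul_apply, smul_eq_mul, Complex.ofRealHom_eq_coe, hu, Sum.elim_inl,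
          Sum.elim_inr]
        rw [Complex.ofReal_mul, Complex.ofReal_inv, e1 ((τ : ℝ) - (τ' : ℝ))]
        simp only [Finset.mul_sum]
        refine Finset.sum_congr rfl fun k _ => ?_
        simp only [map_mul, map_neg, map_inv₀, Complex.conj_ofReal, Complex.conj_I,
          map_intCast, map_ofNat, conj_cE]
        rw [← cE_mul_neg k (τ : ℝ) (τ' : ℝ)]
        push_cast
        ring
    | inr τ =>
      cases b with
      | inl τ' =>
        simp only [Matrix.map_apply, hM, Matrix.fromBlocks_apply₂₁, Matrix.of_apply,
          Matrix.neg_apply, Matrix.smul_apply, smul_eq_mul, Complex.ofRealHom_eq_coe, hu,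
          Sum.elim_inl, Sum.elim_inr]
        rw [Complex.ofReal_neg, Complex.ofReal_mul, Complex.ofReal_inv,
          e1 ((τ : ℝ) - (τ' : ℝ))]
        simp only [Finset.mul_sum, ← Finset.sum_neg_distrib]
        refine Finset.sum_congr rfl fun k _ => ?_
        rw [conj_cE, ← cE_mul_neg k (τ : ℝ) (τ' : ℝ)]
        push_cast
        ring
      | inr τ' =>
        simp only [Matrix.map_apply, hM, Matrix.fromBlocks_apply₂₂, Matrix.of_apply,
          Matrix.neg_apply, Matrix.smul_apply, smul_eq_mul, Complex.ofRealHom_eq_coe, hu,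
          Sum.elim_inr]
        rw [Complex.ofReal_neg, Complex.ofReal_mul, Complex.ofReal_inv,
          e2 ((τ : ℝ) - (τ' : ℝ))]
        simp only [Finset.mul_sum, ← Finset.sum_neg_distrib]
        refine Finset.sum_congr rfl fun k _ => ?_
        simp only [map_mul, map_neg, map_inv₀, Complex.conj_ofReal, Complex.conj_I,
          map_intCast, map_ofNat, conj_cE]
        rw [← cE_mul_neg k (τ : ℝ) (τ' : ℝ)]
        push_cast
        ring
  -- now the invertibility argument
  rw [Matrix.isUnit_iff_isUnit_det, isUnit_iff_ne_zero]
  intro hdet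
  have hdetC : (M.map (Complex.ofRealHom : ℝ →+* ℂ)).det = 0 := by
    have h := RingHom.map_det (Complex.ofRealHom) M
    rw [hdet, map_zero] at h
    rw [show M.map (Complex.ofRealHom : ℝ →+* ℂ)
      = (Complex.ofRealHom : ℝ →+* ℂ).mapMatrix M from rfl, ← h]
  obtain ⟨v, hv0, hvz⟩ := Matrix.exists_mulVec_eq_zero_iff.mpr hdetC
  set w : ℤ → ℂ := fun k => ∑ b, v b * (starRingEnd ℂ) (u b k) with hw
  have h1 : cN * ∑ k ∈ K, (starRingEnd ℂ) (w k) * w k = 0 := by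
    rw [← quad K cN u v]
    calc ∑ a, (starRingEnd ℂ) (v a)
          * (∑ b, (cN * ∑ k ∈ K, u a k * (starRingEnd ℂ) (u b k)) * v b)
        = ∑ a, (starRingEnd ℂ) (v a) * ((M.map (Complex.ofRealHom : ℝ →+* ℂ)).mulVec v a) := by
          refine Finset.sum_congr rfl fun a _ => ?_
          congr 1
          rw [hmap]
          simp [Matrix.mulVec, dotProduct]
      _ = 0 := by rw [hvz]; simp
  have hcNne : cN ≠ 0 := by
    rw [hcN]
    exact inv_ne_zero (Complex.ofReal_ne_zero.mpr hNne)
  have h2 : ∑ k ∈ K, Complex.normSq (w k) = 0 := by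
    have h2' : ((∑ k ∈ K, Complex.normSq (w k) : ℝ) : ℂ) = 0 := by
      push_cast
      rw [show (∑ k ∈ K, (Complex.normSq (w k) : ℂ)) = ∑ k ∈ K, (starRingEnd ℂ) (w k) * w k
        from Finset.sum_congr rfl fun k _ => by rw [mul_comm, Complex.mul_conj]]
      exact (mul_eq_zero.mp h1).resolve_left hcNne
    exact_mod_cast h2'
  have h3 : ∀ k ∈ K, w k = 0 := by
    intro k hk
    have := (Finset.sum_eq_zero_iff_of_nonneg
      (fun k _ => Complex.normSq_nonneg (w k))).mp h2 k hk
    exact Complex.normSq_eq_zero.mp this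
  -- apply independence
  set zf : ι → ℂ := fun i => cE 1 (i : ℝ) with hzf
  have hzinj : Function.Injective zf := by
    intro i j hij
    obtain ⟨hi0, hi1⟩ := hsub i.2
    obtain ⟨hj0, hj1⟩ := hsub j.2
    exact Subtype.ext (cE_one_inj hi0 hi1 hj0 hj1 hij)
  have hz0 : ∀ i, zf i ≠ 0 := fun i => Complex.exp_ne_zero _
  have hcardι : Fintype.card ι ≤ n := by
    have hcc : Fintype.card ι = S.card := Fintype.card_coe S
    omega
  have hne : Nonempty ι := by
    have : S.Nonempty := Finset.card_pos.mp (by omega)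
    exact ⟨⟨this.choose, this.choose_spec⟩⟩
  set A : ι → ℂ := fun i => v (Sum.inl i) with hA
  set B : ι → ℂ := fun i => (-((κ : ℂ))⁻¹ * (2 * (Real.pi : ℂ) * Complex.I)) * v (Sum.inr i)
    with hB
  have H : ∀ k : ℤ, k ∈ K → ∑ i, (A i + B i * (k : ℂ)) * (zf i) ^ k = 0 := by
    intro k hk
    have hmem : -k ∈ K := by
      simp only [hK, Finset.mem_Icc] at hk ⊢
      omega
    have hw0 : ∑ b, v b * (starRingEnd ℂ) (u b (-k)) = 0 := h3 (-k) hmem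
    have expand : ∀ i : ι,
        (A i + B i * (k : ℂ)) * (zf i) ^ k
          = v (Sum.inl i) * (starRingEnd ℂ) (u (Sum.inl i) (-k))
            + v (Sum.inr i) * (starRingEnd ℂ) (u (Sum.inr i) (-k)) := by
      intro i
      simp only [hu, Sum.elim_inl, Sum.elim_inr, map_mul, map_neg, map_inv₀,
        Complex.conj_ofReal, Complex.conj_I, map_intCast, map_ofNat, conj_cE, neg_neg,
        Int.cast_neg, hA, hB, hzf]
      rw [cE_eq_zpow k (i : ℝ)]
      ring
    have hsplit := Fintype.sum_sum_type (fun b : ι ⊕ ι => v b * (starRingEnd ℂ) (u b (-k)))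
    calc ∑ i, (A i + B i * (k : ℂ)) * (zf i) ^ k
        = ∑ i, (v (Sum.inl i) * (starRingEnd ℂ) (u (Sum.inl i) (-k))
            + v (Sum.inr i) * (starRingEnd ℂ) (u (Sum.inr i) (-k))) :=
          Finset.sum_congr rfl fun i _ => expand i
      _ = (∑ i, v (Sum.inl i) * (starRingEnd ℂ) (u (Sum.inl i) (-k)))
            + ∑ i, v (Sum.inr i) * (starRingEnd ℂ) (u (Sum.inr i) (-k)) :=
          Finset.sum_add_distrib
      _ = ∑ b, v b * (starRingEnd ℂ) (u b (-k)) := hsplit.symm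
      _ = 0 := hw0
  have hzero := indep_coeffs n zf hzinj hz0 hcardι hne A B H
  apply hv0
  funext a
  cases a with
  | inl i => exact (hzero i).1
  | inr i =>
    have hb := (hzero i).2
    rw [hB] at hb
    have hc : (-((κ : ℂ))⁻¹ * (2 * (Real.pi : ℂ) * Complex.I)) ≠ 0 := by
      apply mul_ne_zero
      · simpa using Complex.ofReal_ne_zero.mpr hκ
      · exact mul_ne_zero (mul_ne_zero two_ne_zero
          (Complex.ofReal_ne_zero.mpr Real.pi_ne_zero)) Complex.I_ne_zero
    rcases mul_eq_zero.mp hb with h | h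
    · exact absurd h hc
    · exact h
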